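/- Suppose g_n ∈ GL(d,ℝ) is a sequence such that [g_n] converges in P(End(ℝ^d)) to [T] where T is a nonzero endomorphism with rank(T) = 1 and image(T) ⊕ ker(T) = ℝ^d. Then for all sufficiently large n, g_n is proximal, and the attracting eigenlines ℓ⁺_{g_n} converge in P(ℝ^d) to the line image(T). -/

import Mathlib

open Matrix Topology Filter
open scoped MatrixGroups

noncomputable section

abbrev Vd (d : ℕ) := Fin d → ℝ
abbrev Md (d : ℕ) := Matrix (Fin d) (Fin d) ℝ

open scoped Classical in
/-- The multiset of absolute values of the complex eigenvalues (roots of the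
characteristic polynomial over `ℂ`, with multiplicity) of a real `d × d` matrix. -/
def eigMods {d : ℕ} (g : Md d) : Multiset ℝ :=
  ((g.charpoly.map (algebraMap ℝ ℂ)).roots).map (fun z => ‖z‖)

open scoped Classical in
/-- `g` is proximal: the largest modulus of an eigenvalue is attained exactly once. -/
def IsProximal {d : ℕ} (g : Md d) : Prop :=
  ∃ r ∈ eigMods g, (eigMods g).count r = 1 ∧ ∀ s ∈ eigMods g, s ≤ r

/-- `ℓ` is the attracting eigenline of `g`: the eigenspace of a real eigenvalue of
maximal modulus, of dimension one. -/
def IsTopEigenline {d : ℕ} (g : Md d) (ℓ : Submodule ℝ (Vd d)) : Prop :=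
  ∃ μ : ℝ, (∀ s ∈ eigMods g, s ≤ |μ|) ∧
    ℓ = Module.End.eigenspace (Matrix.toLin' g) μ ∧ Module.finrank ℝ ℓ = 1

/-- `C` is the cone over a properly convex domain `Ω ⊂ P(ℝ^d)`: an open convex
cone, nonempty, whose closure contains no line (salient). -/
def IsProperCone {d : ℕ} (C : Set (Vd d)) : Prop :=
  IsOpen C ∧ Convex ℝ C ∧ C.Nonempty ∧
    (∀ v ∈ C, ∀ t : ℝ, 0 < t → t • v ∈ C) ∧
    (∀ v ∈ closure C, -v ∈ closure C → v = 0)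

/-- `g` induces an automorphism of the properly convex domain with cone `C`. -/
def ConeAut {d : ℕ} (C : Set (Vd d)) (g : Md d) : Prop :=
  IsUnit g ∧ (fun v => g.mulVec v) '' C = C

/-- Gauge `M(u/v) = inf{t > 0 : t v - u ∈ closure C}`. -/
def gaugeM {d : ℕ} (C : Set (Vd d)) (u v : Vd d) : ℝ :=
  sInf {t : ℝ | 0 < t ∧ t • v - u ∈ closure C}

/-- The Hilbert distance between the projective points `[u]`, `[v]` of the properly
convex domain with cone `C` : `H([u],[v]) = (1/2) log (M(u/v) M(v/u))`. -/
def hilbertDist {d : ℕ} (C : Set (Vd d)) (u v : Vd d) : ℝ :=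
  (1/2) * Real.log (gaugeM C u v * gaugeM C v u)

/-- The closed projective segment `[[u],[v]]` is contained in `∂Ω`. -/
def BSeg {d : ℕ} (C : Set (Vd d)) (u v : Vd d) : Prop :=
  ∀ s t : ℝ, 0 ≤ s → 0 ≤ t → s • u + t • v ∉ C

/-- `[v]` belongs to the open face `F_Ω([u])`: either `[v] = [u]`, or some open
projective segment contained in `closure Ω` contains both `[u]` and `[v]`. -/
def InFace {d : ℕ} (C : Set (Vd d)) (u v : Vd d) : Prop :=
  v ∈ closure C ∧ ((∃ t : ℝ, 0 < t ∧ v = t • u) ∨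
    ∃ ε : ℝ, 0 < ε ∧ u - ε • v ∈ closure C ∧ v - ε • u ∈ closure C)

/-- `[v]` is an extreme point of `closure Ω`: it is not in the interior of any
nondegenerate projective segment contained in `closure Ω`. -/
def IsExtremePt {d : ℕ} (C : Set (Vd d)) (v : Vd d) : Prop :=
  v ∈ closure C ∧ v ≠ 0 ∧ ∀ a ∈ closure C, ∀ b ∈ closure C,
    ∀ s t : ℝ, 0 < s → 0 < t → v = s • a + t • b → ∃ c : ℝ, a = c • b


/-- The quotient topology on the projective space `P(V)`. -/
instance projTopology {K V : Type*} [DivisionRing K] [AddCommGroup V] [Module K V]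
    [TopologicalSpace V] : TopologicalSpace (Projectivization K V) :=
  inferInstanceAs (TopologicalSpace (Quotient (projectivizationSetoid K V)))

/-- The set of projective points with a representative in `A`. -/
def projSet {d : ℕ} (A : Set (Vd d)) : Set (Projectivization ℝ (Vd d)) :=
  {x | ∃ (v : Vd d) (hv : v ≠ 0), v ∈ A ∧ x = Projectivization.mk ℝ v hv}

/-- The action of `γ ∈ GL(d,ℝ)` on the projective space `P(ℝ^d)`. -/
def pAct {d : ℕ} (γ : GL (Fin d) ℝ) : Projectivization ℝ (Vd d) → Projectivization ℝ (Vd d) :=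
  Projectivization.map (Matrix.toLin' (↑γ : Md d)) (by
    have : Function.LeftInverse (Matrix.toLin' (↑γ⁻¹ : Md d)) (Matrix.toLin' (↑γ : Md d)) := by
      intro v
      simp only [Matrix.toLin'_apply, Matrix.mulVec_mulVec]
      rw [Matrix.coe_units_inv, Matrix.nonsing_inv_mul _ ((Matrix.isUnit_iff_isUnit_det _).mp γ.isUnit), Matrix.one_mulVec]
    exact this.injective)

/-- `T` lies in the closure of `Λ` in `P(End(ℝ^d))`. -/
def InEndClosure {d : ℕ} (Λ : Set (Md d)) (T : Md d) : Prop :=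
  T ≠ 0 ∧ ∃ (g : ℕ → Md d) (c : ℕ → ℝ), (∀ n, g n ∈ Λ) ∧
    Tendsto (fun n => c n • g n) atTop (nhds T)



section Helpers
open Polynomial Module LinearMap
variable {d : ℕ}

variable {d : ℕ}

lemma eval_charpoly' {K : Type*} [Field K] (M : Matrix (Fin d) (Fin d) K) (t : K) :
    M.charpoly.eval t = (t • (1 : Matrix (Fin d) (Fin d) K) - M).det := by
  rw [Matrix.charpoly, eval_det, matPolyEquiv_charmatrix]
  congr 1
  simp [Matrix.scalar, smul_eq_diagonal_mul]

lemma roots_card_eq (M : Matrix (Fin d) (Fin d) ℂ) : M.charpoly.roots.card = d := by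
  rw [(splits_iff_card_roots).mp (IsAlgClosed.splits M.charpoly),
    Matrix.charpoly_natDegree_eq_dim, Fintype.card_fin]

lemma charpoly_eq_prod_roots (M : Matrix (Fin d) (Fin d) ℂ) :
    M.charpoly = (M.charpoly.roots.map (fun r => X - C r)).prod :=
  (IsAlgClosed.splits M.charpoly).eq_prod_roots_of_monic M.charpoly_monic

lemma eval_charpoly_eq_prod (M : Matrix (Fin d) (Fin d) ℂ) (z : ℂ) :
    M.charpoly.eval z = (M.charpoly.roots.map (fun r => z - r)).prod := by
  conv_lhs => rw [charpoly_eq_prod_roots M]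
  rw [eval_multiset_prod, Multiset.map_map]
  congr 1
  apply Multiset.map_congr rfl
  intro r _
  simp

lemma roots_charpoly_smul (M : Matrix (Fin d) (Fin d) ℂ) {c : ℂ} (hc : c ≠ 0) :
    (c • M).charpoly.roots = M.charpoly.roots.map (fun r => c * r) := by
  have key : (c • M).charpoly = ((M.charpoly.roots.map (fun r => c * r)).map
      (fun r => X - C r)).prod := by
    apply Polynomial.funext
    intro z
    rw [eval_charpoly', eval_multiset_prod]
    have h1 : z • (1 : Matrix (Fin d) (Fin d) ℂ) - c • M
        = c • ((c⁻¹ * z) • (1 : Matrix (Fin d) (Fin d) ℂ) - M) := by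
      rw [smul_sub, smul_smul, mul_inv_cancel_left₀ hc]
    rw [h1, Matrix.det_smul, ← eval_charpoly', eval_charpoly_eq_prod, Fintype.card_fin]
    rw [Multiset.map_map, Multiset.map_map]
    have h2 : c ^ d = (M.charpoly.roots.map (fun _ => c)).prod := by
      rw [Multiset.map_const', Multiset.prod_replicate, roots_card_eq]
    rw [h2, ← Multiset.prod_map_mul]
    congr 1
    apply Multiset.map_congr rfl
    intro r _
    simp only [Function.comp_apply, eval_sub, eval_X, eval_C]
    rw [mul_sub, mul_inv_cancel_left₀ hc]
  rw [key, roots_multiset_prod_X_sub_C]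

lemma conj_mem_roots (M : Matrix (Fin d) (Fin d) ℝ) {z : ℂ}
    (hz : z ∈ (M.map (algebraMap ℝ ℂ)).charpoly.roots) :
    (starRingEnd ℂ) z ∈ (M.map (algebraMap ℝ ℂ)).charpoly.roots := by
  have hne : (M.map (algebraMap ℝ ℂ)).charpoly ≠ 0 := (Matrix.charpoly_monic _).ne_zero
  rw [mem_roots hne] at hz ⊢
  rw [Matrix.charpoly_map] at hz ⊢
  have hmap : (M.charpoly.map (algebraMap ℝ ℂ)).map (starRingEnd ℂ)
      = M.charpoly.map (algebraMap ℝ ℂ) := by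
    rw [Polynomial.map_map]
    congr 1
    ext x
    simp [Complex.conj_ofReal]
  have : ((M.charpoly.map (algebraMap ℝ ℂ)).map (starRingEnd ℂ)).eval ((starRingEnd ℂ) z)
      = (starRingEnd ℂ) ((M.charpoly.map (algebraMap ℝ ℂ)).eval z) := by
    rw [eval_map, eval₂_at_apply]
  rw [hmap] at this
  rw [IsRoot, this, hz.eq_zero, map_zero]

lemma abs_root_le (M : Matrix (Fin d) (Fin d) ℂ) {z : ℂ} (hz : z ∈ M.charpoly.roots) :
    ‖z‖ ≤ ∑ i, ∑ j, ‖M i j‖ := by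
  have hne : M.charpoly ≠ 0 := (Matrix.charpoly_monic _).ne_zero
  rw [mem_roots hne] at hz
  have hdet : (z • (1 : Matrix (Fin d) (Fin d) ℂ) - M).det = 0 := by
    rw [← eval_charpoly']; exact hz.eq_zero
  obtain ⟨v, hv, hmv⟩ := (Matrix.exists_mulVec_eq_zero_iff).mpr hdet
  have hMv : M.mulVec v = z • v := by
    have := hmv
    rw [Matrix.sub_mulVec, Matrix.smul_mulVec, Matrix.one_mulVec, sub_eq_zero] at this
    exact this.symm
  -- pick index with max modulus
  have hd : 0 < d := Nat.pos_of_ne_zero (fun h => hv (by subst h; exact Subsingleton.elim v 0))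
  have : Nonempty (Fin d) := ⟨⟨0, hd⟩⟩
  obtain ⟨i₀, -, hi₀⟩ := Finset.exists_max_image Finset.univ (fun i => ‖v i‖)
    ⟨⟨0, hd⟩, Finset.mem_univ _⟩
  have hvi₀ : 0 < ‖v i₀‖ := by
    rcases (norm_nonneg (v i₀)).lt_or_eq with h | h
    · exact h
    · exfalso; apply hv; funext i
      have h2 := hi₀ i (Finset.mem_univ i)
      rw [← h] at h2
      show v i = 0
      exact norm_eq_zero.mp (le_antisymm h2 (norm_nonneg _))
  have key : ‖z‖ * ‖v i₀‖ ≤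
      (∑ i, ∑ j, ‖M i j‖) * ‖v i₀‖ := by
    have h1 : z * v i₀ = ∑ j, M i₀ j * v j := by
      have := congrFun hMv i₀
      rw [Matrix.mulVec, dotProduct] at this
      simpa [mul_comm] using this.symm
    calc ‖z‖ * ‖v i₀‖ = ‖z * v i₀‖ := (norm_mul _ _).symm
    _ = ‖∑ j, M i₀ j * v j‖ := by rw [h1]
    _ ≤ ∑ j, ‖M i₀ j * v j‖ := norm_sum_le _ _
    _ = ∑ j, ‖M i₀ j‖ * ‖v j‖ := by simp [_root_.map_mul]
    _ ≤ ∑ j, ‖M i₀ j‖ * ‖v i₀‖ := by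
        apply Finset.sum_le_sum
        intro j _
        exact mul_le_mul_of_nonneg_left (hi₀ j (Finset.mem_univ j)) (norm_nonneg _)
    _ = (∑ j, ‖M i₀ j‖) * ‖v i₀‖ := by rw [Finset.sum_mul]
    _ ≤ (∑ i, ∑ j, ‖M i j‖) * ‖v i₀‖ := by
        apply mul_le_mul_of_nonneg_right _ (norm_nonneg _)
        exact Finset.single_le_sum (f := fun i => ∑ j, ‖M i j‖)
          (fun i _ => Finset.sum_nonneg fun j _ => norm_nonneg _) (Finset.mem_univ i₀)
  exact le_of_mul_le_mul_right key hvi₀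

section GeomAlg
variable {K : Type*} [Field K] {V : Type*} [AddCommGroup V] [Module K V] [FiniteDimensional K V]

lemma pow_finrank_eigenspace_dvd (f : Module.End K V) (μ : K) :
    (X - C μ) ^ (finrank K (f.eigenspace μ)) ∣ f.charpoly := by
  classical
  set W := f.eigenspace μ with hW
  obtain ⟨U, hU⟩ := Submodule.exists_isCompl W
  let e := Submodule.prodEquivOfIsCompl W U hU
  let bW := finBasis K W
  let bU := finBasis K U
  let b := (bW.prod bU).map e
  have hb_inl : ∀ jw, b (Sum.inl jw) = (bW jw : V) := by
    intro jw
    simp [b, e, Basis.map_apply, Basis.prod_apply]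
  have hrepr : ∀ jw, b.repr (f (b (Sum.inl jw))) = Finsupp.single (Sum.inl jw) μ := by
    intro jw
    rw [hb_inl jw]
    have h1 : f (bW jw : V) = μ • (bW jw : V) :=
      Module.End.mem_eigenspace_iff.mp (bW jw).2
    rw [h1, _root_.map_smul, ← hb_inl jw, b.repr_self]
    ext i
    simp [Finsupp.single_apply]
  have h11 : (LinearMap.toMatrix b b f).toBlocks₁₁ = μ • 1 := by
    ext iw jw
    simp only [Matrix.toBlocks₁₁, LinearMap.toMatrix_apply, Matrix.of_apply, hrepr jw]
    simp [Finsupp.single_apply, Matrix.one_apply, eq_comm, Sum.inl.injEq]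
  have h21 : (LinearMap.toMatrix b b f).toBlocks₂₁ = 0 := by
    ext iu jw
    simp only [Matrix.toBlocks₂₁, LinearMap.toMatrix_apply, Matrix.of_apply, hrepr jw]
    simp [Finsupp.single_apply]
  have hchar : f.charpoly = (LinearMap.toMatrix b b f).charpoly :=
    (LinearMap.charpoly_toMatrix f b).symm
  rw [hchar, ← Matrix.fromBlocks_toBlocks (LinearMap.toMatrix b b f), h11, h21,
    Matrix.charpoly_fromBlocks_zero₂₁]
  have h1 : (μ • (1 : Matrix (Fin (finrank K W)) (Fin (finrank K W)) K)).charpoly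
      = (X - C μ) ^ (finrank K W) := by
    have hd : (μ • (1 : Matrix (Fin (finrank K W)) (Fin (finrank K W)) K)) =
        Matrix.diagonal (fun _ => μ) := by
      ext i j; by_cases h : i = j <;> simp [Matrix.one_apply, Matrix.diagonal, h]
    rw [hd, Matrix.charpoly_of_upperTriangular _ (Matrix.blockTriangular_diagonal _)]
    simp [Finset.prod_const, Finset.card_univ]
  rw [h1]
  exact Dvd.intro _ rfl

end GeomAlg

lemma charpoly_toLin' {d : ℕ} (M : Md d) : (Matrix.toLin' M).charpoly = M.charpoly := by
  rw [← LinearMap.charpoly_toMatrix (Matrix.toLin' M) (Pi.basisFun ℝ (Fin d)),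
    LinearMap.toMatrix_eq_toMatrix', LinearMap.toMatrix'_toLin']

lemma charpoly_rank_one {d : ℕ} (T : Md d) (lam : ℝ)
    (hcompl : IsCompl (LinearMap.range (Matrix.toLin' T)) (LinearMap.ker (Matrix.toLin' T)))
    (hrk : finrank ℝ (LinearMap.range (Matrix.toLin' T)) = 1)
    (hlam : ∀ x ∈ LinearMap.range (Matrix.toLin' T), Matrix.toLin' T x = lam • x) :
    T.charpoly = (X - C lam) * X ^ (d - 1) := by
  classical
  set f := Matrix.toLin' T with hf
  set W := LinearMap.range f
  set U := LinearMap.ker f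
  have hWker : finrank ℝ U = d - 1 := by
    have h1 := Submodule.finrank_sup_add_finrank_inf_eq W U
    rw [hcompl.sup_eq_top, hcompl.inf_eq_bot] at h1
    simp only [finrank_top, finrank_bot, add_zero, hrk] at h1
    have h2 : finrank ℝ (Vd d) = d := by
      simp [Module.finrank_pi]
    rw [h2] at h1
    omega
  let e := Submodule.prodEquivOfIsCompl W U hcompl
  have hfW : ∀ x ∈ W, f x ∈ W := fun x _ => LinearMap.mem_range.mpr ⟨x, rfl⟩
  let f₁ : Module.End ℝ W := f.restrict hfW
  let f₂ : Module.End ℝ U := 0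
  have hconj : f = e.conj (f₁.prodMap f₂) := by
    apply LinearMap.ext
    intro v
    have hv : v = e (e.symm v) := (e.apply_symm_apply v).symm
    rw [hv]
    obtain ⟨x, y⟩ := e.symm v
    rw [LinearEquiv.conj_apply]
    simp only [LinearMap.comp_apply, LinearEquiv.coe_coe, LinearEquiv.symm_apply_apply]
    have he : ∀ p : W × U, e p = (p.1 : Vd d) + (p.2 : Vd d) := fun p => rfl
    rw [he, he]
    simp only [LinearMap.prodMap_apply]
    rw [map_add]
    have hy0 : f (y : Vd d) = 0 := y.2
    have hx1 : ((f₁ x : W) : Vd d) = f (x : Vd d) := rfl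
    rw [hy0, hx1]
    simp [f₂]
  have hchar := congrArg LinearMap.charpoly hconj
  rw [LinearEquiv.charpoly_conj, LinearMap.charpoly_prodMap] at hchar
  have hchar2 : f₂.charpoly = X ^ (d - 1) := by
    have : f₂.charpoly = X ^ (finrank ℝ U) := IsNilpotent.charpoly_eq_X_pow_finrank (by
      exact IsNilpotent.zero)
    rw [this, hWker]
  have hchar1 : f₁.charpoly = X - C lam := by
    -- f₁ = lam • 1 on a 1-dim space
    have hf₁ : f₁ = lam • (1 : Module.End ℝ W) := by
      apply LinearMap.ext
      intro x
      have : ((f₁ x : W) : Vd d) = f (x : Vd d) := rfl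
      have h2 : f (x : Vd d) = lam • (x : Vd d) := hlam _ x.2
      apply Subtype.ext
      rw [this, h2]
      rfl
    rw [hf₁]
    -- charpoly of lam • 1 on 1-dim space
    let b := finBasis ℝ W
    rw [← LinearMap.charpoly_toMatrix (lam • (1 : Module.End ℝ W)) b]
    have hmat : LinearMap.toMatrix b b (lam • (1 : Module.End ℝ W))
        = Matrix.diagonal (fun _ => lam) := by
      ext i j
      rw [LinearMap.toMatrix_apply]
      simp only [LinearMap.smul_apply, Module.End.one_apply, _root_.map_smul, b.repr_self]
      by_cases h : i = j <;> simp [Finsupp.single_apply, Matrix.diagonal, h, eq_comm]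
    rw [hmat, Matrix.charpoly_of_upperTriangular _ (Matrix.blockTriangular_diagonal _)]
    rw [hrk]
    simp
  rw [← _root_.charpoly_toLin' T, hchar, hchar1, hchar2]

lemma count_coe_ofFn {α : Type*} [DecidableEq α] {m : ℕ} (ζ : Fin m → α) (a : α) :
    Multiset.count a ↑(List.ofFn ζ) = (Finset.univ.filter (fun i => ζ i = a)).card := by
  have h1 : (↑(List.ofFn ζ) : Multiset α) = Multiset.map ζ (Finset.univ.val) := by
    rw [List.ofFn_eq_map, ← Multiset.map_coe]
    rfl
  rw [h1, Multiset.count_map]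
  rw [Finset.card_def, Finset.filter_val]
  congr 1
  apply Multiset.filter_congr
  intro x _
  exact eq_comm

end Helpers

set_option maxHeartbeats 1000000 in
open Polynomial Module LinearMap in
/-- if invertible matrices `g n` converge in `P(End(ℝ^d))` to a
rank-one `T` with `image T ⊕ ker T = ℝ^d`, then the `g n` are eventually proximal
and their attracting eigenlines converge to `image T`. -/
theorem stmt2 {d : ℕ} (g : ℕ → Md d) (hinv : ∀ n, IsUnit (g n)) (T : Md d) (hT : T ≠ 0)
    (hrank : T.rank = 1)
    (hcompl : IsCompl (LinearMap.range (Matrix.toLin' T)) (LinearMap.ker (Matrix.toLin' T)))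
    (c : ℕ → ℝ) (hconv : Tendsto (fun n => c n • g n) atTop (nhds T)) :
    ∃ N : ℕ, (∀ n ≥ N, IsProximal (g n)) ∧
      ∃ v : ℕ → Vd d, (∀ n ≥ N, v n ≠ 0 ∧ IsTopEigenline (g n) (ℝ ∙ v n)) ∧
        ∃ w : Vd d, w ≠ 0 ∧ w ∈ LinearMap.range (Matrix.toLin' T) ∧
          Tendsto v atTop (nhds w) := by
  classical
  rcases Nat.eq_zero_or_pos d with hd0 | hd
  · exfalso; apply hT; subst hd0; exact Subsingleton.elim T 0
  -- ### linear algebra setup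
  set f := Matrix.toLin' T with hfdef
  have hrk1 : Module.finrank ℝ (LinearMap.range f) = 1 := by
    have hmv : Matrix.mulVecLin T = f := by
      apply LinearMap.ext; intro x; rw [Matrix.mulVecLin_apply, hfdef, Matrix.toLin'_apply]
    rw [← hmv]; exact hrank
  obtain ⟨w₀', hw₀'mem, hw₀'ne⟩ : ∃ x ∈ LinearMap.range f, x ≠ 0 := by
    by_contra h
    push_neg at h
    have hbot : LinearMap.range f = ⊥ := (Submodule.eq_bot_iff _).mpr h
    rw [hbot] at hrk1
    simp at hrk1
  have hspan0 : LinearMap.range f = Submodule.span ℝ {w₀'} := by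
    symm
    apply Submodule.eq_of_le_of_finrank_le
    · rw [Submodule.span_le, Set.singleton_subset_iff]; exact hw₀'mem
    · rw [hrk1, finrank_span_singleton hw₀'ne]
  obtain ⟨j₀, hj₀⟩ : ∃ j, w₀' j ≠ 0 := by
    by_contra h; push_neg at h; exact hw₀'ne (funext h)
  set w₁ : Vd d := if 0 < w₀' j₀ then w₀' else -w₀' with hw₁def
  have hw₁pos : 0 < w₁ j₀ := by
    rw [hw₁def]; split_ifs with h
    · exact h
    · have h2 : w₀' j₀ < 0 := (not_lt.mp h).lt_of_ne hj₀
      show 0 < -(w₀' j₀)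
      linarith
  have hw₁ne : w₁ ≠ 0 := by
    intro h; rw [h] at hw₁pos; simp at hw₁pos
  have hw₁span : LinearMap.range f = Submodule.span ℝ {w₁} := by
    rw [hspan0, hw₁def]; split_ifs with h
    · rfl
    · rw [show -w₀' = (-1 : ℝ) • w₀' by simp,
        Submodule.span_singleton_smul_eq (by norm_num : IsUnit (-1:ℝ))]
  set w : Vd d := ‖w₁‖⁻¹ • w₁ with hwdef
  have hnw₁pos : (0:ℝ) < ‖w₁‖ := norm_pos_iff.mpr hw₁ne
  have hwnorm : ‖w‖ = 1 := by
    rw [hwdef, norm_smul, Real.norm_eq_abs, abs_inv, abs_norm, inv_mul_cancel₀ hnw₁pos.ne']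
  have hwpos : 0 < w j₀ := by
    rw [hwdef]
    show 0 < ‖w₁‖⁻¹ * w₁ j₀
    exact mul_pos (inv_pos.mpr hnw₁pos) hw₁pos
  have hwne : w ≠ 0 := by
    intro h; rw [h] at hwpos; simp at hwpos
  have hwspan : LinearMap.range f = Submodule.span ℝ {w} := by
    rw [hw₁span, hwdef,
      Submodule.span_singleton_smul_eq (isUnit_iff_ne_zero.mpr (inv_ne_zero hnw₁pos.ne'))]
  have hwmem : w ∈ LinearMap.range f := by
    rw [hwspan]; exact Submodule.mem_span_singleton_self w
  obtain ⟨lam, hlam⟩ : ∃ lam : ℝ, f w = lam • w := by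
    have hmem : f w ∈ LinearMap.range f := LinearMap.mem_range_self f w
    rw [hwspan, Submodule.mem_span_singleton] at hmem
    obtain ⟨a, ha⟩ := hmem; exact ⟨a, ha.symm⟩
  have hlamAll : ∀ x ∈ LinearMap.range f, f x = lam • x := by
    intro x hx
    rw [hwspan, Submodule.mem_span_singleton] at hx
    obtain ⟨a, ha⟩ := hx
    rw [← ha, _root_.map_smul, hlam, smul_comm]
  have hlam0 : lam ≠ 0 := by
    intro h
    have hker : w ∈ LinearMap.ker f := by
      rw [LinearMap.mem_ker, hlam, h, zero_smul]
    have hdisj := hcompl.disjoint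
    rw [Submodule.disjoint_def] at hdisj
    exact hwne (hdisj w hwmem hker)
  have hcharT : T.charpoly = (X - C lam) * X ^ (d-1) :=
    charpoly_rank_one T lam hcompl hrk1 hlamAll
  -- ### complex matrices
  set gc : ℕ → Matrix (Fin d) (Fin d) ℂ := fun n => (g n).map (algebraMap ℝ ℂ) with hgcdef
  set Tc : Matrix (Fin d) (Fin d) ℂ := T.map (algebraMap ℝ ℂ) with hTcdef
  set A : ℕ → Matrix (Fin d) (Fin d) ℂ := fun n => ((c n • g n).map (algebraMap ℝ ℂ)) with hAdef
  have hmapcont : Continuous (fun M : Md d => M.map (algebraMap ℝ ℂ)) := by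
    apply continuous_pi; intro i; apply continuous_pi; intro j
    show Continuous fun M : Md d => ((M.map (algebraMap ℝ ℂ)) i j)
    simp only [Matrix.map_apply]
    exact Complex.continuous_ofReal.comp ((continuous_apply j).comp (continuous_apply i))
  have hconvA : Tendsto A atTop (𝓝 Tc) := (hmapcont.tendsto T).comp hconv
  have hAsmul : ∀ n, A n = ((c n : ℂ)) • gc n := by
    intro n; ext i j
    simp [hAdef, hgcdef, Matrix.map_apply, Matrix.smul_apply, Complex.ofReal_mul]
  have hcharTc : Tc.charpoly = (X - C ((lam : ℂ))) * X ^ (d - 1) := by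
    rw [hTcdef, Matrix.charpoly_map, hcharT]
    simp [Polynomial.map_mul, Polynomial.map_sub, Polynomial.map_pow]
  have hrootsTc : Tc.charpoly.roots = (lam : ℂ) ::ₘ Multiset.replicate (d - 1) 0 := by
    rw [hcharTc, Polynomial.roots_mul (mul_ne_zero (X_sub_C_ne_zero _) (pow_ne_zero _ X_ne_zero)),
      Polynomial.roots_X_sub_C, Polynomial.roots_pow, Polynomial.roots_X]
    rw [Multiset.nsmul_singleton, Multiset.singleton_add]
  -- ### root tuples
  set ρ : ℕ → Fin d → ℂ := fun n i => ((A n).charpoly.roots.toList.getD i 0) with hρdef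
  have hρ : ∀ n, (A n).charpoly.roots = (↑(List.ofFn (ρ n)) : Multiset ℂ) := by
    intro n
    have hlen : (A n).charpoly.roots.toList.length = d := by
      rw [Multiset.length_toList, roots_card_eq]
    have h2 : List.ofFn (ρ n) = (A n).charpoly.roots.toList := by
      apply List.ext_getElem (by simp [hlen])
      intro i hi1 hi2
      simp only [List.getElem_ofFn]
      exact List.getD_eq_getElem _ 0 hi2
    rw [h2, Multiset.coe_toList]
  have hmemρ : ∀ n i, ρ n i ∈ (A n).charpoly.roots := by
    intro n i
    rw [hρ n, Multiset.mem_coe, List.mem_ofFn]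
    exact ⟨i, rfl⟩
  have hevalA : ∀ n (z : ℂ), (A n).charpoly.eval z = ∏ i, (z - ρ n i) := by
    intro n z
    rw [eval_charpoly_eq_prod, hρ n, Multiset.map_coe, Multiset.prod_coe, List.map_ofFn,
      List.prod_ofFn]
    rfl
  -- ### KEY CLAIM: root localization
  have hP : ∀ ε : ℝ, 0 < ε → ∀ᶠ n in atTop, ∃ i0 : Fin d,
      ‖ρ n i0 - (lam:ℂ)‖ < ε ∧ ∀ i, i ≠ i0 → ‖ρ n i‖ < ε := by
    intro ε hε
    by_contra hcon
    rw [Filter.not_eventually] at hcon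
    set S : Matrix (Fin d) (Fin d) ℂ → ℝ := fun M => ∑ i, ∑ j, ‖M i j‖ with hSdef
    have hScont : Continuous S := by
      apply continuous_finset_sum; intro i _
      apply continuous_finset_sum; intro j _
      exact continuous_norm.comp ((continuous_apply j).comp (continuous_apply i))
    set CB : ℝ := S Tc + 1 with hCBdef
    have hSbd : ∀ᶠ n in atTop, S (A n) ≤ CB := by
      have h1 : Tendsto (fun n => S (A n)) atTop (𝓝 (S Tc)) := (hScont.tendsto Tc).comp hconvA
      exact (h1.eventually_lt_const (by rw [hCBdef]; linarith)).mono fun n h => h.le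
    have hfreq := hcon.and_eventually hSbd
    obtain ⟨φ, hφmono, hφ⟩ := Filter.extraction_of_frequently_atTop hfreq
    have hCB0 : 0 ≤ CB := by
      have h0 : 0 ≤ S Tc :=
        Finset.sum_nonneg fun i _ => Finset.sum_nonneg fun j _ => norm_nonneg _
      rw [hCBdef]; linarith
    have hbdd : ∀ k, (ρ (φ k)) ∈ Metric.closedBall (0 : Fin d → ℂ) CB := by
      intro k
      rw [Metric.mem_closedBall, dist_zero_right]
      refine (pi_norm_le_iff_of_nonneg hCB0).mpr fun i => ?_
      calc ‖ρ (φ k) i‖ ≤ S (A (φ k)) := abs_root_le _ (hmemρ (φ k) i)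
      _ ≤ CB := (hφ k).2
    obtain ⟨ζ, hζmem, ψ, hψmono, hψ⟩ :=
      tendsto_subseq_of_bounded Metric.isBounded_closedBall hbdd
    have hprodTc : ∀ z : ℂ, Tc.charpoly.eval z = ∏ i, (z - ζ i) := by
      intro z
      have hdc : Continuous
          (fun M : Matrix (Fin d) (Fin d) ℂ => (z • (1 : Matrix (Fin d) (Fin d) ℂ) - M).det) :=
        (continuous_const.sub continuous_id).matrix_det
      have h2 : Tendsto (fun k => A (φ (ψ k))) atTop (𝓝 Tc) :=
        hconvA.comp ((hφmono.comp hψmono).tendsto_atTop)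
      have h3 := (hdc.tendsto Tc).comp h2
      have h4 : ∀ M : Matrix (Fin d) (Fin d) ℂ, (z • 1 - M).det = M.charpoly.eval z :=
        fun M => (eval_charpoly' M z).symm
      simp only [Function.comp_def, h4] at h3
      have hc : Continuous (fun x : Fin d → ℂ => ∏ i, (z - x i)) :=
        continuous_finset_prod _ (fun i _ => continuous_const.sub (continuous_apply i))
      have h5 := (hc.tendsto ζ).comp hψ
      simp only [Function.comp_def] at h5
      have h6 : ∀ k, ∏ i, (z - ρ (φ (ψ k)) i) = (A (φ (ψ k))).charpoly.eval z :=
        fun k => (hevalA _ z).symm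
      simp only [h6] at h5
      exact tendsto_nhds_unique h3 h5
    have hprodpoly : Tc.charpoly = (Multiset.map (fun r => X - C r) ↑(List.ofFn ζ)).prod := by
      apply Polynomial.funext
      intro z
      rw [hprodTc z, eval_multiset_prod, Multiset.map_coe, Multiset.map_coe, Multiset.prod_coe,
        List.map_ofFn, List.map_ofFn, List.prod_ofFn]
      simp
    have hrootsζ : (↑(List.ofFn ζ) : Multiset ℂ) = (lam : ℂ) ::ₘ Multiset.replicate (d - 1) 0 := by
      calc (↑(List.ofFn ζ) : Multiset ℂ)
          = ((Multiset.map (fun r => X - C r) (↑(List.ofFn ζ) : Multiset ℂ)).prod).roots :=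
            (Polynomial.roots_multiset_prod_X_sub_C (↑(List.ofFn ζ) : Multiset ℂ)).symm
      _ = Tc.charpoly.roots := by rw [← hprodpoly]
      _ = (lam : ℂ) ::ₘ Multiset.replicate (d - 1) 0 := hrootsTc
    have hlammem : (lam:ℂ) ∈ (↑(List.ofFn ζ) : Multiset ℂ) := by
      rw [hrootsζ]; exact Multiset.mem_cons_self _ _
    rw [Multiset.mem_coe, List.mem_ofFn] at hlammem
    obtain ⟨i0, hi0⟩ := hlammem
    have hcount1 : (Finset.univ.filter (fun i => ζ i = (lam:ℂ))).card = 1 := by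
      rw [← count_coe_ofFn, hrootsζ, Multiset.count_cons_self, Multiset.count_replicate]
      split_ifs with h
      · exfalso
        apply Complex.ofReal_ne_zero.mpr hlam0
        first
        | exact h
        | exact h.symm
      · norm_num
    have hothers : ∀ i, i ≠ i0 → ζ i = 0 := by
      intro i hi
      have hmem : ζ i ∈ (↑(List.ofFn ζ) : Multiset ℂ) := by
        rw [Multiset.mem_coe, List.mem_ofFn]; exact ⟨i, rfl⟩
      rw [hrootsζ, Multiset.mem_cons] at hmem
      rcases hmem with h | h
      · exfalso
        have hsub : ({i, i0} : Finset (Fin d)) ⊆ Finset.univ.filter (fun i => ζ i = (lam:ℂ)) := by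
          intro x hx
          rw [Finset.mem_insert, Finset.mem_singleton] at hx
          rcases hx with rfl | rfl <;> simp [Finset.mem_filter, h, hi0]
        have hcard2 : 2 ≤ (Finset.univ.filter (fun i => ζ i = (lam:ℂ))).card := by
          have hc := Finset.card_le_card hsub
          rwa [Finset.card_insert_of_notMem (by simpa using hi), Finset.card_singleton] at hc
        omega
      · exact Multiset.eq_of_mem_replicate h
    have hcoord : ∀ i : Fin d, Tendsto (fun k => ρ (φ (ψ k)) i) atTop (𝓝 (ζ i)) := by
      intro i
      exact ((continuous_apply i).tendsto ζ).comp hψ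
    have hev1 : ∀ᶠ k in atTop, ‖ρ (φ (ψ k)) i0 - (lam:ℂ)‖ < ε := by
      have h1 : Tendsto (fun k => ρ (φ (ψ k)) i0) atTop (𝓝 ((lam:ℂ))) := by
        rw [← hi0]; exact hcoord i0
      filter_upwards [Metric.tendsto_nhds.mp h1 ε hε] with k hk
      rwa [Complex.dist_eq] at hk
    have hev2 : ∀ᶠ k in atTop, ∀ i, i ≠ i0 → ‖ρ (φ (ψ k)) i‖ < ε := by
      rw [eventually_all]
      intro i
      by_cases hi : i = i0
      · exact Filter.Eventually.of_forall (fun k h => absurd hi h)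
      · have h0 : Tendsto (fun k => ρ (φ (ψ k)) i) atTop (𝓝 0) := by
          rw [← hothers i hi]; exact hcoord i
        filter_upwards [Metric.tendsto_nhds.mp h0 ε hε] with k hk _
        rwa [Complex.dist_eq, sub_zero] at hk
    obtain ⟨k, hk1, hk2⟩ := (hev1.and hev2).exists
    exact (hφ (ψ k)).1 ⟨i0, hk1, hk2⟩
  -- ### pick N and the top roots
  set ε₀ : ℝ := |lam| / 4 with hε₀def
  have hε₀pos : 0 < ε₀ := by
    rw [hε₀def]
    have : 0 < |lam| := abs_pos.mpr hlam0
    linarith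
  have hlam4 : ‖(lam:ℂ)‖ = 4 * ε₀ := by
    rw [Complex.norm_real, Real.norm_eq_abs, hε₀def]; ring
  have hcne : ∀ᶠ n in atTop, c n ≠ 0 := by
    filter_upwards [hconv.eventually_ne hT] with n hn
    intro h; apply hn; rw [h, zero_smul]
  obtain ⟨N, hN⟩ := eventually_atTop.mp ((hP ε₀ hε₀pos).and hcne)
  have hPtotal : ∀ n, ∃ j : Fin d, N ≤ n →
      (‖ρ n j - (lam:ℂ)‖ < ε₀ ∧ ∀ i, i ≠ j → ‖ρ n i‖ < ε₀) := by
    intro n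
    by_cases h : N ≤ n
    · obtain ⟨j, hj⟩ := (hN n h).1
      exact ⟨j, fun _ => hj⟩
    · exact ⟨⟨0, hd⟩, fun h' => absurd h' h⟩
  choose i0 hi0 using hPtotal
  set zt : ℕ → ℂ := fun n => ρ n (i0 n) with hztdef
  have hcn0 : ∀ n, N ≤ n → c n ≠ 0 := fun n hn => (hN n hn).2
  have habs_zt : ∀ n, N ≤ n → 3 * ε₀ ≤ ‖zt n‖ := by
    intro n hn
    have h1 := (hi0 n hn).1
    have h3 : ‖(lam:ℂ)‖ - ‖zt n‖ ≤ ‖zt n - (lam:ℂ)‖ := by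
      rw [norm_sub_rev]
      exact norm_sub_norm_le _ _
    rw [hlam4] at h3
    have h1' : ‖zt n - (lam:ℂ)‖ < ε₀ := h1
    linarith
  have huniq : ∀ n, N ≤ n → ∀ j : Fin d, ‖ρ n j - (lam:ℂ)‖ < ε₀ → j = i0 n := by
    intro n hn j hj
    by_contra hne
    have h2 := (hi0 n hn).2 j hne
    have h3 : ‖(lam:ℂ)‖ ≤ ‖ρ n j - (lam:ℂ)‖ + ‖ρ n j‖ := by
      calc ‖(lam:ℂ)‖ = ‖(lam:ℂ) - ρ n j + ρ n j‖ := by ring_nf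
      _ ≤ ‖(lam:ℂ) - ρ n j‖ + ‖ρ n j‖ := norm_add_le _ _
      _ = ‖ρ n j - (lam:ℂ)‖ + ‖ρ n j‖ := by
          rw [norm_sub_rev]
    rw [hlam4] at h3
    linarith
  have hztlim : Tendsto zt atTop (𝓝 ((lam:ℂ))) := by
    rw [Metric.tendsto_atTop]
    intro ε hε
    obtain ⟨N', hN'⟩ := eventually_atTop.mp (hP (min ε ε₀) (lt_min hε hε₀pos))
    refine ⟨max N N', fun n hn => ?_⟩
    obtain ⟨j, hj1, hj2⟩ := hN' n (le_trans (le_max_right _ _) hn)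
    have hnN : N ≤ n := le_trans (le_max_left _ _) hn
    have hji : j = i0 n := huniq n hnN j (lt_of_lt_of_le hj1 (min_le_right _ _))
    rw [Complex.dist_eq]
    have hzeq : zt n = ρ n j := by rw [hztdef, hji]
    rw [hzeq]
    exact lt_of_lt_of_le hj1 (min_le_left _ _)
  have hztreal : ∀ n, N ≤ n → ((zt n).re : ℂ) = zt n := by
    intro n hn
    have hconj : (starRingEnd ℂ) (zt n) ∈ (A n).charpoly.roots :=
      conj_mem_roots (c n • g n) (hmemρ n (i0 n))
    rw [hρ n, Multiset.mem_coe, List.mem_ofFn] at hconj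
    obtain ⟨j, hj⟩ := hconj
    have habs : ‖ρ n j - (lam:ℂ)‖ < ε₀ := by
      rw [hj]
      have heq : (starRingEnd ℂ) (zt n) - (lam:ℂ) = (starRingEnd ℂ) (zt n - (lam:ℂ)) := by
        rw [map_sub, Complex.conj_ofReal]
      rw [heq, Complex.norm_conj]
      exact (hi0 n hn).1
    have hji := huniq n hn j habs
    rw [hji] at hj
    have hj' : (starRingEnd ℂ) (zt n) = zt n := hj.symm
    exact Complex.conj_eq_iff_re.mp hj'
  -- eigenvalues of g n
  set μ : ℕ → ℝ := fun n => (zt n).re / c n with hμdef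
  have hcμ : ∀ n, N ≤ n → (c n) * (μ n) = (zt n).re := by
    intro n hn
    have hc := hcn0 n hn
    show c n * ((zt n).re / c n) = (zt n).re
    field_simp
  have hcmuC : ∀ n, N ≤ n → ((c n : ℂ)) * ((μ n : ℂ)) = zt n := by
    intro n hn
    rw [← Complex.ofReal_mul, hcμ n hn, hztreal n hn]
  have hrootsg : ∀ n, N ≤ n →
      (gc n).charpoly.roots = Multiset.map (fun r => ((c n : ℂ))⁻¹ * r) (A n).charpoly.roots := by
    intro n hn
    have hc0 : ((c n : ℂ)) ≠ 0 := Complex.ofReal_ne_zero.mpr (hcn0 n hn)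
    rw [hAsmul n, roots_charpoly_smul _ hc0, Multiset.map_map]
    symm
    have hcomp : ((fun r : ℂ => ((c n:ℂ))⁻¹ * r) ∘ fun r => (c n:ℂ) * r) = (fun r : ℂ => r) := by
      funext r
      simp [Function.comp, inv_mul_cancel_left₀ hc0]
    rw [hcomp, Multiset.map_id']
  have hcountzt : ∀ n, N ≤ n → (A n).charpoly.roots.count (zt n) = 1 := by
    intro n hn
    rw [hρ n, count_coe_ofFn]
    have hfeq : Finset.univ.filter (fun i => ρ n i = zt n) = {i0 n} := by
      apply Finset.eq_singleton_iff_unique_mem.mpr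
      constructor
      · rw [Finset.mem_filter]; exact ⟨Finset.mem_univ _, rfl⟩
      · intro x hx
        rw [Finset.mem_filter] at hx
        by_contra hne
        have h2 := (hi0 n hn).2 x hne
        rw [hx.2] at h2
        have h3 := habs_zt n hn
        linarith
    rw [hfeq, Finset.card_singleton]
  have hcountμ : ∀ n, N ≤ n → (gc n).charpoly.roots.count ((μ n : ℂ)) = 1 := by
    intro n hn
    have hc0 : ((c n : ℂ)) ≠ 0 := Complex.ofReal_ne_zero.mpr (hcn0 n hn)
    have hmueq : ((μ n : ℂ)) = ((c n:ℂ))⁻¹ * zt n := by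
      rw [← hcmuC n hn, inv_mul_cancel_left₀ hc0]
    rw [hrootsg n hn, hmueq,
      Multiset.count_map_eq_count' _ _ (mul_right_injective₀ (inv_ne_zero hc0))]
    exact hcountzt n hn
  have hμmem : ∀ n, N ≤ n → ((μ n:ℂ)) ∈ (gc n).charpoly.roots := by
    intro n hn
    rw [← Multiset.count_pos, hcountμ n hn]
    norm_num
  have hμrootR : ∀ n, N ≤ n → ((g n).charpoly).IsRoot (μ n) := by
    intro n hn
    have h1 := hμmem n hn
    rw [mem_roots ((Matrix.charpoly_monic _).ne_zero)] at h1
    have h2 : (gc n).charpoly = ((g n).charpoly).map (algebraMap ℝ ℂ) := by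
      rw [hgcdef]; exact Matrix.charpoly_map _ _
    rw [h2] at h1
    have h3 : (algebraMap ℝ ℂ) ((g n).charpoly.eval (μ n)) = 0 := by
      rw [← Polynomial.eval₂_at_apply, ← Polynomial.eval_map]
      exact h1
    have h4 := (algebraMap ℝ ℂ).injective (by rw [h3, map_zero] : (algebraMap ℝ ℂ) _ = (algebraMap ℝ ℂ) 0)
    exact h4
  have hev : ∀ n, N ≤ n → ∃ u : Vd d, u ≠ 0 ∧ (g n).mulVec u = (μ n) • u := by
    intro n hn
    have hdet : ((μ n) • (1 : Md d) - g n).det = 0 := by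
      rw [← eval_charpoly']
      exact (hμrootR n hn)
    obtain ⟨u, hu0, hu⟩ := (Matrix.exists_mulVec_eq_zero_iff).mpr hdet
    refine ⟨u, hu0, ?_⟩
    rw [Matrix.sub_mulVec, Matrix.smul_mulVec, Matrix.one_mulVec, sub_eq_zero] at hu
    exact hu.symm
  have heig1 : ∀ n, N ≤ n →
      Module.finrank ℝ (Module.End.eigenspace (Matrix.toLin' (g n)) (μ n)) ≤ 1 := by
    intro n hn
    have hchg : (Matrix.toLin' (g n)).charpoly = (g n).charpoly := _root_.charpoly_toLin' (g n)
    have hne : (Matrix.toLin' (g n)).charpoly ≠ 0 := by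
      rw [hchg]; exact (Matrix.charpoly_monic _).ne_zero
    have hle : Module.finrank ℝ (Module.End.eigenspace (Matrix.toLin' (g n)) (μ n)) ≤
        Polynomial.rootMultiplicity (μ n) ((Matrix.toLin' (g n)).charpoly) := by
      rw [Polynomial.le_rootMultiplicity_iff hne]
      exact pow_finrank_eigenspace_dvd (Matrix.toLin' (g n)) (μ n)
    have h2 : Polynomial.rootMultiplicity (μ n) ((Matrix.toLin' (g n)).charpoly)
        = (g n).charpoly.roots.count (μ n) := by
      rw [hchg, Polynomial.count_roots]
    have h3 : (g n).charpoly.roots.count (μ n) ≤ (gc n).charpoly.roots.count ((μ n : ℂ)) := by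
      have hinj : Function.Injective (algebraMap ℝ ℂ) := (algebraMap ℝ ℂ).injective
      calc (g n).charpoly.roots.count (μ n)
          = ((g n).charpoly.roots.map (algebraMap ℝ ℂ)).count ((algebraMap ℝ ℂ) (μ n)) :=
            (Multiset.count_map_eq_count' _ _ hinj _).symm
      _ ≤ Polynomial.rootMultiplicity ((μ n : ℂ)) ((g n).charpoly.map (algebraMap ℝ ℂ)) :=
            Polynomial.count_map_roots_of_injective _ hinj _
      _ = ((g n).charpoly.map (algebraMap ℝ ℂ)).roots.count ((μ n : ℂ)) :=
            (Polynomial.count_roots _).symm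
      _ = (gc n).charpoly.roots.count ((μ n : ℂ)) := by
            rw [hgcdef, Matrix.charpoly_map]
    rw [hcountμ n hn] at h3
    omega
  -- normalized eigenvectors
  set nv : Vd d → Vd d := fun x => (if 0 ≤ x j₀ then ‖x‖⁻¹ else -‖x‖⁻¹) • x with hnvdef
  have hnv : ∀ x : Vd d, x ≠ 0 →
      nv x ≠ 0 ∧ ‖nv x‖ = 1 ∧ 0 ≤ nv x j₀ ∧ ∃ t : ℝ, t ≠ 0 ∧ nv x = t • x := by
    intro x hx
    have hnx : ‖x‖ ≠ 0 := norm_ne_zero_iff.mpr hx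
    set t := (if 0 ≤ x j₀ then ‖x‖⁻¹ else -‖x‖⁻¹) with htdef
    have ht0 : t ≠ 0 := by
      rw [htdef]; split_ifs <;> simp [hnx]
    have hnvx : nv x = t • x := by rw [hnvdef]
    refine ⟨by rw [hnvx]; exact smul_ne_zero ht0 hx, ?_, ?_, t, ht0, hnvx⟩
    · rw [hnvx, norm_smul, Real.norm_eq_abs, htdef]
      split_ifs <;> simp [abs_inv, abs_norm, inv_mul_cancel₀ hnx]
    · rw [hnvx]
      show 0 ≤ t * x j₀
      rw [htdef]; split_ifs with h
      · exact mul_nonneg (inv_nonneg.mpr (norm_nonneg _)) h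
      · have hlt : x j₀ < 0 := not_le.mp h
        have hpos : 0 < ‖x‖⁻¹ := inv_pos.mpr (lt_of_le_of_ne (norm_nonneg x) (Ne.symm hnx))
        nlinarith
  have hnvw : nv w = w := by
    rw [hnvdef]
    simp only []
    rw [if_pos hwpos.le, hwnorm]
    norm_num
  have hev' : ∀ n, ∃ u : Vd d,
      (N ≤ n → (u ≠ 0 ∧ (g n).mulVec u = (μ n) • u)) ∧ (¬ N ≤ n → u = w) := by
    intro n
    by_cases h : N ≤ n
    · obtain ⟨u, hu⟩ := hev n h
      exact ⟨u, fun _ => hu, fun h' => absurd h h'⟩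
    · exact ⟨w, fun h' => absurd h' h, fun _ => rfl⟩
  choose u hu using hev'
  set v : ℕ → Vd d := fun n => nv (u n) with hvdef
  have hvprop : ∀ n, N ≤ n →
      v n ≠ 0 ∧ ‖v n‖ = 1 ∧ 0 ≤ v n j₀ ∧ (g n).mulVec (v n) = μ n • (v n) := by
    intro n hn
    obtain ⟨hu0, huev⟩ := (hu n).1 hn
    obtain ⟨hnv0, hnvnorm, hnvpos, t, ht0, hteq⟩ := hnv (u n) hu0
    refine ⟨hnv0, hnvnorm, hnvpos, ?_⟩
    show (g n).mulVec (nv (u n)) = μ n • (nv (u n))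
    rw [hteq, Matrix.mulVec_smul, huev, smul_comm]
  have hline : ∀ n, N ≤ n →
      (ℝ ∙ (v n)) = Module.End.eigenspace (Matrix.toLin' (g n)) (μ n) := by
    intro n hn
    obtain ⟨hv0, hvnorm, hvpos, hvec⟩ := hvprop n hn
    have hmemeig : v n ∈ Module.End.eigenspace (Matrix.toLin' (g n)) (μ n) := by
      rw [Module.End.mem_eigenspace_iff, Matrix.toLin'_apply]
      exact hvec
    apply Submodule.eq_of_le_of_finrank_le
    · rw [Submodule.span_le, Set.singleton_subset_iff]; exact hmemeig
    · rw [finrank_span_singleton hv0]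
      exact heig1 n hn
  have habsμ : ∀ n, N ≤ n → |μ n| = |c n|⁻¹ * ‖zt n‖ := by
    intro n hn
    have h3 : ‖zt n‖ = |(zt n).re| := by
      conv_lhs => rw [← hztreal n hn]
      rw [Complex.norm_real, Real.norm_eq_abs]
    rw [h3, hμdef]
    show |(zt n).re / c n| = |c n|⁻¹ * |(zt n).re|
    rw [abs_div, div_eq_mul_inv, mul_comm]
  have heigMods : ∀ n, N ≤ n → (∀ s ∈ eigMods (g n), s ≤ |μ n|) := by
    intro n hn s hs
    rw [eigMods, ← Matrix.charpoly_map] at hs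
    rw [Multiset.mem_map] at hs
    obtain ⟨z, hz, rfl⟩ := hs
    have hz' : z ∈ (gc n).charpoly.roots := hz
    rw [hrootsg n hn, Multiset.mem_map] at hz'
    obtain ⟨r, hr, rfl⟩ := hz'
    rw [hρ n, Multiset.mem_coe, List.mem_ofFn] at hr
    obtain ⟨i, rfl⟩ := hr
    have hrle : ‖ρ n i‖ ≤ ‖zt n‖ := by
      by_cases hi : i = i0 n
      · rw [hi]
      · have h1 := (hi0 n hn).2 i hi
        have h2 := habs_zt n hn
        linarith
    calc ‖(↑(c n))⁻¹ * ρ n i‖ = |c n|⁻¹ * ‖ρ n i‖ := by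
          rw [norm_mul, norm_inv, Complex.norm_real, Real.norm_eq_abs]
    _ ≤ |c n|⁻¹ * ‖zt n‖ :=
          mul_le_mul_of_nonneg_left hrle (by positivity)
    _ = |μ n| := (habsμ n hn).symm
  have hprox : ∀ n, N ≤ n → IsProximal (g n) := by
    intro n hn
    have hc0 : c n ≠ 0 := hcn0 n hn
    have hcc0 : ((c n:ℂ)) ≠ 0 := Complex.ofReal_ne_zero.mpr hc0
    refine ⟨|μ n|, ?_, ?_, heigMods n hn⟩
    · rw [eigMods, ← Matrix.charpoly_map, Multiset.mem_map]
      exact ⟨(μ n : ℂ), hμmem n hn, by rw [Complex.norm_real, Real.norm_eq_abs]⟩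
    · rw [eigMods, ← Matrix.charpoly_map, Multiset.count_map]
      have hfilter : Multiset.filter (fun z => |μ n| = ‖z‖) ((gc n).charpoly.roots)
          = Multiset.filter (fun z => z = ((μ n : ℂ))) ((gc n).charpoly.roots) := by
        apply Multiset.filter_congr
        intro z hz
        constructor
        · intro habs
          rw [hrootsg n hn, Multiset.mem_map] at hz
          obtain ⟨r, hr, rfl⟩ := hz
          rw [hρ n, Multiset.mem_coe, List.mem_ofFn] at hr
          obtain ⟨i, rfl⟩ := hr
          by_cases hi : i = i0 n
          · rw [hi]
            show ((c n:ℂ))⁻¹ * zt n = ((μ n : ℂ))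
            rw [← hcmuC n hn, inv_mul_cancel_left₀ hcc0]
          · exfalso
            have h1 := (hi0 n hn).2 i hi
            have h2 := habs_zt n hn
            have h4 : ‖(↑(c n))⁻¹ * ρ n i‖ = |c n|⁻¹ * ‖ρ n i‖ := by
              rw [norm_mul, norm_inv, Complex.norm_real, Real.norm_eq_abs]
            rw [h4] at habs
            have h5 := habsμ n hn
            have h6 : |c n|⁻¹ * ‖zt n‖ = |c n|⁻¹ * ‖ρ n i‖ := by
              rw [← h5, habs]
            have h7 : (0:ℝ) < |c n|⁻¹ := by
              rw [inv_pos, abs_pos]; exact hc0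
            have h8 : ‖zt n‖ = ‖ρ n i‖ :=
              mul_left_cancel₀ h7.ne' h6
            linarith
        · intro hz'
          rw [hz', Complex.norm_real, Real.norm_eq_abs]
      rw [hfilter, Multiset.filter_eq', Multiset.card_replicate]
      exact hcountμ n hn
  -- ### final assembly
  refine ⟨N, fun n hn => hprox n hn, v, fun n hn => ⟨(hvprop n hn).1, ?_⟩, w, hwne, hwmem, ?_⟩
  · exact ⟨μ n, heigMods n hn, (hline n hn), finrank_span_singleton (hvprop n hn).1⟩
  · -- convergence of eigenlines
    apply tendsto_of_subseq_tendsto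
    intro ns hns
    have hsph : ∀ k, v (ns k) ∈ Metric.sphere (0 : Vd d) 1 := by
      intro k
      rw [Metric.mem_sphere, dist_zero_right]
      by_cases h : N ≤ ns k
      · exact (hvprop _ h).2.1
      · have hw' : u (ns k) = w := (hu (ns k)).2 h
        show ‖nv (u (ns k))‖ = 1
        rw [hw', hnvw, hwnorm]
    obtain ⟨a, hamem, ms, hmsmono, hms⟩ := (isCompact_sphere (0 : Vd d) 1).tendsto_subseq hsph
    refine ⟨ms, ?_⟩
    have hidx : Tendsto (fun k => ns (ms k)) atTop atTop := hns.comp hmsmono.tendsto_atTop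
    have hevge : ∀ᶠ k in atTop, N ≤ ns (ms k) := hidx.eventually_ge_atTop N
    have h1 : Tendsto (fun k => (c (ns (ms k)) • g (ns (ms k))).mulVec (v (ns (ms k)))) atTop
        (𝓝 (T.mulVec a)) := by
      have hcontmv : Continuous (fun p : Md d × Vd d => p.1.mulVec p.2) :=
        continuous_fst.matrix_mulVec continuous_snd
      have h2 : Tendsto (fun k => ((c (ns (ms k)) • g (ns (ms k))), v (ns (ms k)))) atTop
          (𝓝 (T, a)) := (hconv.comp hidx).prodMk_nhds hms
      exact ((hcontmv.tendsto (T, a)).comp h2).congr (fun k => rfl)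
    have h3 : Tendsto (fun k => ((zt (ns (ms k))).re : ℝ) • (v (ns (ms k)))) atTop
        (𝓝 (lam • a)) := by
      have hre : Tendsto (fun n => (zt n).re) atTop (𝓝 lam) := by
        have h4 := (Complex.continuous_re.tendsto ((lam : ℂ))).comp hztlim
        simpa [Function.comp_def] using h4
      exact (hre.comp hidx).smul hms
    have heqev : ∀ᶠ k in atTop, (c (ns (ms k)) • g (ns (ms k))).mulVec (v (ns (ms k)))
        = ((zt (ns (ms k))).re : ℝ) • (v (ns (ms k))) := by
      filter_upwards [hevge] with k hk
      obtain ⟨_, _, _, hvec⟩ := hvprop _ hk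
      rw [Matrix.smul_mulVec, hvec, smul_smul, hcμ _ hk]
    have h4 : T.mulVec a = lam • a :=
      tendsto_nhds_unique (h1.congr' heqev) h3
    have hamem2 : a ∈ LinearMap.range f := by
      have hfa : f a = lam • a := by
        rw [hfdef, Matrix.toLin'_apply]; exact h4
      have haeq : a = lam⁻¹ • (f a) := by
        rw [hfa, smul_smul, inv_mul_cancel₀ hlam0, one_smul]
      rw [haeq]
      exact Submodule.smul_mem _ _ (LinearMap.mem_range_self f a)
    rw [hwspan, Submodule.mem_span_singleton] at hamem2
    obtain ⟨t, hta⟩ := hamem2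
    have hanorm : ‖a‖ = 1 := by
      rw [Metric.mem_sphere, dist_zero_right] at hamem; exact hamem
    have htabs : |t| = 1 := by
      have h5 : ‖a‖ = |t| * ‖w‖ := by rw [← hta, norm_smul, Real.norm_eq_abs]
      rw [hanorm, hwnorm, mul_one] at h5; exact h5.symm
    have haj : 0 ≤ a j₀ := by
      have hcc : Tendsto (fun k => (v (ns (ms k))) j₀) atTop (𝓝 (a j₀)) :=
        ((continuous_apply j₀).tendsto a).comp hms
      apply ge_of_tendsto hcc
      filter_upwards [hevge] with k hk
      exact (hvprop _ hk).2.2.1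
    have ht1 : t = 1 := by
      rcases (abs_eq (by norm_num : (0:ℝ) ≤ 1)).mp htabs with h | h
      · exact h
      · exfalso
        have h5 := haj
        rw [← hta] at h5
        have h6 : (t • w) j₀ = t * w j₀ := rfl
        rw [h6, h] at h5
        linarith [hwpos]
    rw [ht1, one_smul] at hta
    rw [hta]
    exact hms


end
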